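/- Let X be a Hilbert space and E₊, E₋, F₊, F₋ : ℂ → B(X) operator-valued entire functions such that (E₋, E₊) and (F₋, F₊) are de Branges operators (E₊, F₊ invertible on ℂ₊; E₋, F₋ invertible on ℂ₋; E₊⁻¹E₋ and F₊⁻¹F₋ lie in the operator Schur class of ℂ₊ with unitary boundary values). Assume F₊(z) commutes with E₊(z) and E₋(z), and F₋(z) commutes with E₊(z) and E₋(z), for all z. Then (E₋F₋, E₊F₊) is again a de Branges operator; in particular (E₊F₊)⁻¹(E₋F₋) is a Schur-class function on ℂ₊ with unitary (isometric and co-isometric) boundary values. -/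

import Mathlib

open ContinuousLinearMap

variable {X : Type*} [NormedAddCommGroup X] [InnerProductSpace ℂ X] [CompleteSpace X]

/-- A de Branges operator: a pair `(E₋, E₊)` of entire Fredholm-operator-valued functions
with `E₊` invertible on `ℂ₊`, `E₋` invertible on `ℂ₋`, `E₊⁻¹E₋` contractive (Schur class)
on `ℂ₊`, and with unitary (isometric and co-isometric) boundary values on `ℝ`. -/
def IsDeBrangesOperator (Em Ep : ℂ → (X →L[ℂ] X)) : Prop :=
  Differentiable ℂ Ep ∧ Differentiable ℂ Em ∧
    (∀ z : ℂ, FiniteDimensional ℂ (LinearMap.ker ((Ep z : X →L[ℂ] X) : X →ₗ[ℂ] X)) ∧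
      FiniteDimensional ℂ (LinearMap.ker ((ContinuousLinearMap.adjoint (Ep z) : X →L[ℂ] X) : X →ₗ[ℂ] X))) ∧
    (∀ z : ℂ, FiniteDimensional ℂ (LinearMap.ker ((Em z : X →L[ℂ] X) : X →ₗ[ℂ] X)) ∧
      FiniteDimensional ℂ (LinearMap.ker ((ContinuousLinearMap.adjoint (Em z) : X →L[ℂ] X) : X →ₗ[ℂ] X))) ∧
    (∀ z : ℂ, 0 < z.im → IsUnit (Ep z)) ∧
    (∀ z : ℂ, z.im < 0 → IsUnit (Em z)) ∧
    (∀ z : ℂ, 0 < z.im → ‖Ring.inverse (Ep z) ∘L Em z‖ ≤ 1) ∧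
    (∀ x : ℝ, IsUnit (Ep (x : ℂ)) →
      (Ring.inverse (Ep (x : ℂ)) ∘L Em (x : ℂ)) ∘L
          ContinuousLinearMap.adjoint (Ring.inverse (Ep (x : ℂ)) ∘L Em (x : ℂ)) = 1 ∧
        ContinuousLinearMap.adjoint (Ring.inverse (Ep (x : ℂ)) ∘L Em (x : ℂ)) ∘L
          (Ring.inverse (Ep (x : ℂ)) ∘L Em (x : ℂ)) = 1)


lemma fd_ker_comp (f g : X →L[ℂ] X)
    (hf : FiniteDimensional ℂ (LinearMap.ker (f : X →ₗ[ℂ] X)))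
    (hg : FiniteDimensional ℂ (LinearMap.ker (g : X →ₗ[ℂ] X))) :
    FiniteDimensional ℂ (LinearMap.ker ((f ∘L g : X →L[ℂ] X) : X →ₗ[ℂ] X)) := by
  have hmem : ∀ x ∈ LinearMap.ker ((f ∘L g : X →L[ℂ] X) : X →ₗ[ℂ] X), g x ∈ LinearMap.ker (f : X →ₗ[ℂ] X) := by
    intro x hx
    simpa [LinearMap.mem_ker] using hx
  let φ : LinearMap.ker ((f ∘L g : X →L[ℂ] X) : X →ₗ[ℂ] X) →ₗ[ℂ] LinearMap.ker (f : X →ₗ[ℂ] X) :=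
    (g : X →ₗ[ℂ] X).restrict hmem
  have hkφ : FiniteDimensional ℂ (LinearMap.ker φ) := by
    let ψ : LinearMap.ker φ →ₗ[ℂ] LinearMap.ker (g : X →ₗ[ℂ] X) :=
      { toFun := fun x => ⟨(x : LinearMap.ker ((f ∘L g : X →L[ℂ] X) : X →ₗ[ℂ] X)), by
          have h1 : φ x.1 = 0 := x.2
          have h2 : g ((x : LinearMap.ker ((f ∘L g : X →L[ℂ] X) : X →ₗ[ℂ] X)) : X) = 0 := Subtype.ext_iff.mp h1
          simpa [LinearMap.mem_ker] using h2⟩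
        map_add' := fun x y => rfl
        map_smul' := fun c x => rfl }
    have hinj : Function.Injective ψ := by
      intro a b hab
      have h0 : (ψ a : X) = (ψ b : X) := Subtype.ext_iff.mp hab
      exact Subtype.ext (Subtype.ext h0)
    exact FiniteDimensional.of_injective ψ hinj
  have hrange : FiniteDimensional ℂ (LinearMap.range φ) := inferInstance
  have h1 := LinearMap.rank_range_add_rank_ker φ
  have hlt : Module.rank ℂ (LinearMap.ker ((f ∘L g : X →L[ℂ] X) : X →ₗ[ℂ] X)) < Cardinal.aleph0 := by
    rw [← h1]
    exact Cardinal.add_lt_aleph0 (Module.rank_lt_aleph0 ℂ _) (Module.rank_lt_aleph0 ℂ _)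
  exact Module.rank_lt_aleph0_iff.mp hlt

lemma inv_comm_of_comm {R : Type*} [Ring R] {a b : R} (ha : IsUnit a) (h : Commute a b) :
    Commute (Ring.inverse a) b := by
  obtain ⟨u, rfl⟩ := ha
  rw [Ring.inverse_unit]
  exact (h.symm.units_inv_right).symm

theorem isDeBrangesOperator_mul
    (Em Ep Fm Fp : ℂ → (X →L[ℂ] X))
    (hE : IsDeBrangesOperator Em Ep) (hF : IsDeBrangesOperator Fm Fp)
    (hc1 : ∀ z : ℂ, Fp z ∘L Ep z = Ep z ∘L Fp z)
    (hc2 : ∀ z : ℂ, Fp z ∘L Em z = Em z ∘L Fp z)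
    (hc3 : ∀ z : ℂ, Fm z ∘L Ep z = Ep z ∘L Fm z)
    (hc4 : ∀ z : ℂ, Fm z ∘L Em z = Em z ∘L Fm z) :
    IsDeBrangesOperator (fun z => Em z ∘L Fm z) (fun z => Ep z ∘L Fp z) := by
  obtain ⟨hEd, hEd', hEk, hEk', hEu, hEu', hEn, hEb⟩ := hE
  obtain ⟨hFd, hFd', hFk, hFk', hFu, hFu', hFn, hFb⟩ := hF
  have key : ∀ z : ℂ, IsUnit (Ep z) → IsUnit (Fp z) →
      Ring.inverse (Ep z ∘L Fp z) ∘L (Em z ∘L Fm z)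
        = (Ring.inverse (Ep z) ∘L Em z) ∘L (Ring.inverse (Fp z) ∘L Fm z) := by
    intro z hep hfp
    have cEF : Commute (Ep z) (Fp z) := (hc1 z).symm
    have cFm : Commute (Fp z) (Em z) := hc2 z
    show Ring.inverse (Ep z * Fp z) * (Em z * Fm z)
        = (Ring.inverse (Ep z) * Em z) * (Ring.inverse (Fp z) * Fm z)
    have h1 : Ring.inverse (Ep z * Fp z) = Ring.inverse (Fp z) * Ring.inverse (Ep z) :=
      Ring.mul_inverse_rev' cEF
    have c2 : Commute (Ring.inverse (Fp z)) (Em z) := inv_comm_of_comm hfp cFm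
    have c3 : Commute (Ring.inverse (Fp z)) (Ring.inverse (Ep z)) :=
      (inv_comm_of_comm hep (inv_comm_of_comm hfp cEF.symm).symm).symm
    rw [h1]
    calc Ring.inverse (Fp z) * Ring.inverse (Ep z) * (Em z * Fm z)
        = Ring.inverse (Ep z) * Ring.inverse (Fp z) * (Em z * Fm z) := by rw [c3.eq]
      _ = Ring.inverse (Ep z) * (Ring.inverse (Fp z) * Em z) * Fm z := by
          rw [mul_assoc, mul_assoc, mul_assoc]
      _ = Ring.inverse (Ep z) * (Em z * Ring.inverse (Fp z)) * Fm z := by rw [c2.eq]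
      _ = Ring.inverse (Ep z) * Em z * (Ring.inverse (Fp z) * Fm z) := by
          rw [mul_assoc, mul_assoc, mul_assoc]
  refine ⟨?_, ?_, ?_, ?_, ?_, ?_, ?_, ?_⟩
  · exact hEd.mul hFd
  · exact hEd'.mul hFd'
  · intro z
    exact ⟨fd_ker_comp _ _ (hEk z).1 (hFk z).1, by
      rw [adjoint_comp]
      exact fd_ker_comp _ _ (hFk z).2 (hEk z).2⟩
  · intro z
    exact ⟨fd_ker_comp _ _ (hEk' z).1 (hFk' z).1, by
      rw [adjoint_comp]
      exact fd_ker_comp _ _ (hFk' z).2 (hEk' z).2⟩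
  · intro z hz
    exact (hEu z hz).mul (hFu z hz)
  · intro z hz
    exact (hEu' z hz).mul (hFu' z hz)
  · intro z hz
    rw [key z (hEu z hz) (hFu z hz)]
    calc ‖(Ring.inverse (Ep z) ∘L Em z) ∘L (Ring.inverse (Fp z) ∘L Fm z)‖
        ≤ ‖Ring.inverse (Ep z) ∘L Em z‖ * ‖Ring.inverse (Fp z) ∘L Fm z‖ := opNorm_comp_le _ _
      _ ≤ 1 * 1 := mul_le_mul (hEn z hz) (hFn z hz) (norm_nonneg _) zero_le_one
      _ = 1 := by ring
  · intro x hx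
    have cEF : Commute (Ep (x:ℂ)) (Fp (x:ℂ)) := (hc1 (x:ℂ)).symm
    have hx' : IsUnit (Ep (x:ℂ) * Fp (x:ℂ)) := hx
    obtain ⟨hep, hfp⟩ := cEF.isUnit_mul_iff.mp hx'
    obtain ⟨hE1, hE2⟩ := hEb x hep
    obtain ⟨hF1, hF2⟩ := hFb x hfp
    rw [key (x:ℂ) hep hfp]
    set A := Ring.inverse (Ep (x:ℂ)) ∘L Em (x:ℂ) with hA
    set B := Ring.inverse (Fp (x:ℂ)) ∘L Fm (x:ℂ) with hB
    have hE1' : A * adjoint A = 1 := hE1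
    have hE2' : adjoint A * A = 1 := hE2
    have hF1' : B * adjoint B = 1 := hF1
    have hF2' : adjoint B * B = 1 := hF2
    constructor
    · rw [adjoint_comp]
      show (A * B) * (adjoint B * adjoint A) = 1
      rw [mul_assoc, ← mul_assoc B, hF1', one_mul, hE1']
    · rw [adjoint_comp]
      show (adjoint B * adjoint A) * (A * B) = 1
      rw [mul_assoc, ← mul_assoc (adjoint A), hE2', one_mul, hF2']
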